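/- Let $\mathbb{K}$ be a commutative ring, $A$ a $\mathbb{K}$-algebra, $M$ a complex in the derived category $\mathsf{D}(\mathsf{Mod}\,A)$ of left $A$-modules, and $i_0$ an integer. Suppose that $\mathrm{H}^i M = 0$ for all $i > i_0$, and that $P := \mathrm{H}^{i_0} M$ is a projective $A$-module. Then there is an isomorphism $M \cong P[-i_0] \oplus N$ in $\mathsf{D}(\mathsf{Mod}\,A)$, where $N$ is a complex satisfying $N^i = 0$ for all $i \geq i_0$. -/

import Mathlib

open CategoryTheory Limits

open CategoryTheory Limits ZeroObject HomologicalComplex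

namespace Stmt0Aux

variable {C : Type*} [Category C] [Abelian C]

lemma isZero_homology_of_isZero (K : CochainComplex C ℤ) (i : ℤ) (h : IsZero (K.X i)) :
    IsZero (K.homology i) := by
  rw [← K.exactAt_iff_isZero_homology]
  rw [K.exactAt_iff]
  exact ShortComplex.exact_of_isZero_X₂ _ h

variable (X : CochainComplex C ℤ) (n : ℤ)

/-- degreewise objects of the truncation `N`. -/
noncomputable def NX (i : ℤ) : C :=
  if i < n then X.X i else if i = n then X.cycles n else 0

noncomputable def NXiso₁ (i : ℤ) (hi : i < n) : NX X n i ≅ X.X i :=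
  eqToIso (by rw [NX, if_pos hi])

noncomputable def NXiso₂ (i : ℤ) (hi : i = n) : NX X n i ≅ X.cycles n :=
  eqToIso (by rw [NX, if_neg (by omega), if_pos hi])

lemma NX_isZero (i : ℤ) (hi : n < i) : IsZero (NX X n i) := by
  rw [NX, if_neg (by omega), if_neg (by omega)]
  exact isZero_zero C

noncomputable def Nd (i j : ℤ) : NX X n i ⟶ NX X n j :=
  if h : i + 1 = j then
    if hj : j < n then
      (NXiso₁ X n i (by omega)).hom ≫ X.d i j ≫ (NXiso₁ X n j hj).inv
    else if hj' : j = n then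
      (NXiso₁ X n i (by omega)).hom ≫ X.toCycles i n ≫ (NXiso₂ X n j hj').inv
    else 0
  else 0

noncomputable abbrev N : CochainComplex C ℤ where
  X := NX X n
  d := Nd X n
  shape i j h := by
    rw [Nd, dif_neg (by simpa using h)]
  d_comp_d' i j k hij hjk := by
    simp only [ComplexShape.up_Rel] at hij hjk
    subst hij hjk
    rw [Nd, Nd, dif_pos rfl, dif_pos rfl]
    by_cases h1 : i + 1 + 1 < n
    · rw [dif_pos h1, dif_pos (by omega)]
      simp
    · by_cases h2 : i + 1 + 1 = n
      · rw [dif_pos (by omega), dif_neg (by omega), dif_pos h2]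
        simp [X.d_toCycles]
      · rw [dif_neg (show ¬ (i + 1 + 1 < n) by omega), dif_neg h2, comp_zero]

lemma N_d_eq₁ (i j : ℤ) (hij : i + 1 = j) (hj : j < n) :
    (N X n).d i j = (NXiso₁ X n i (by omega)).hom ≫ X.d i j ≫ (NXiso₁ X n j hj).inv := by
  show Nd X n i j = _
  rw [Nd, dif_pos hij, dif_pos hj]

lemma N_d_eq₂ (i j : ℤ) (hij : i + 1 = j) (hj : j = n) :
    (N X n).d i j = (NXiso₁ X n i (by omega)).hom ≫ X.toCycles i n ≫ (NXiso₂ X n j hj).inv := by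
  show Nd X n i j = _
  rw [Nd, dif_pos hij, dif_neg (by omega), dif_pos hj]

/-- the inclusion `N ⟶ X`. -/
noncomputable def ι : N X n ⟶ X where
  f i :=
    if hi : i < n then (NXiso₁ X n i hi).hom
    else if hi' : i = n then
      (NXiso₂ X n i hi').hom ≫ X.iCycles n ≫ eqToHom (by rw [hi'])
    else 0
  comm' i j hij := by
    simp only [ComplexShape.up_Rel] at hij
    subst hij
    beta_reduce
    by_cases h1 : i + 1 < n
    · rw [dif_pos (by omega), dif_pos h1, N_d_eq₁ X n i (i+1) rfl h1]
      simp
    · by_cases h2 : i + 1 = n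
      · rw [dif_pos (by omega), dif_neg (by omega), dif_pos h2,
          N_d_eq₂ X n i (i+1) rfl h2]
        subst h2
        simp [X.toCycles_i]
      · have hz : (N X n).d i (i + 1) = 0 :=
          (NX_isZero X n (i + 1) (by omega)).eq_of_tgt _ _
        rw [hz, zero_comp]
        by_cases h3 : i = n
        · subst h3
          rw [dif_neg (lt_irrefl i), dif_pos rfl]
          simp [X.iCycles_d]
        · rw [dif_neg (by omega), dif_neg h3, zero_comp]

lemma ι_f₁ (i : ℤ) (hi : i < n) : (ι X n).f i = (NXiso₁ X n i hi).hom := by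
  show dite _ _ _ = _
  rw [dif_pos hi]

lemma ι_f₂ : (ι X n).f n = (NXiso₂ X n n rfl).hom ≫ X.iCycles n := by
  show dite _ _ _ = _
  rw [dif_neg (by omega), dif_pos rfl]
  simp

lemma quasiIsoAt_ι_lt (i : ℤ) (hi : i < n) : QuasiIsoAt (ι X n) i := by
  rw [quasiIsoAt_iff' _ (i - 1) i (i + 1) (by simp) (by simp)]
  have e1 : IsIso ((ι X n).f (i - 1)) := by
    rw [ι_f₁ X n _ (by omega)]; infer_instance
  have e2 : IsIso ((ι X n).f i) := by
    rw [ι_f₁ X n _ hi]; infer_instance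
  have e3 : Mono ((ι X n).f (i + 1)) := by
    by_cases h1 : i + 1 < n
    · rw [ι_f₁ X n _ h1]; infer_instance
    · have h2 : i + 1 = n := by omega
      subst h2
      rw [ι_f₂ X]
      infer_instance
  have : Epi (((shortComplexFunctor' C _ (i-1) i (i+1)).map (ι X n)).τ₁) := by
    change Epi ((ι X n).f (i-1)); infer_instance
  have : IsIso (((shortComplexFunctor' C _ (i-1) i (i+1)).map (ι X n)).τ₂) := by
    change IsIso ((ι X n).f i); infer_instance
  have : Mono (((shortComplexFunctor' C _ (i-1) i (i+1)).map (ι X n)).τ₃) := by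
    change Mono ((ι X n).f (i+1)); infer_instance
  exact ShortComplex.quasiIso_of_epi_of_isIso_of_mono _

lemma N_d_to_zero : (N X n).d n (n + 1) = 0 :=
  (NX_isZero X n (n + 1) (by omega)).eq_of_tgt _ _

instance : IsIso ((N X n).iCycles n) :=
  (N X n).isIso_iCycles n (n + 1) (by simp) (N_d_to_zero X n)

noncomputable def cyclesIso : (N X n).cycles n ≅ X.cycles n :=
  asIso ((N X n).iCycles n) ≪≫ NXiso₂ X n n rfl

lemma cyclesIso_inv_iCycles :
    (cyclesIso X n).inv ≫ (N X n).iCycles n = (NXiso₂ X n n rfl).inv := by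
  simp [cyclesIso]

lemma cyclesMap_ι : cyclesMap (ι X n) n = (cyclesIso X n).hom := by
  rw [← cancel_mono (X.iCycles n), cyclesMap_i, ι_f₂]
  simp [cyclesIso]

lemma toCycles_comp_cyclesIso_inv :
    X.toCycles (n - 1) n ≫ (cyclesIso X n).inv =
      (NXiso₁ X n (n - 1) (by omega)).inv ≫ (N X n).toCycles (n - 1) n := by
  rw [← cancel_mono ((N X n).iCycles n)]
  simp only [Category.assoc, cyclesIso_inv_iCycles, toCycles_i]
  rw [show Nd X n (n - 1) n = (N X n).d (n - 1) n from rfl, N_d_eq₂ X n (n - 1) n (by omega) rfl]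
  simp

instance quasiIsoAt_ι_eq : QuasiIsoAt (ι X n) n := by
  rw [quasiIsoAt_iff_isIso_homologyMap]
  have hX := X.homologyIsCokernel (n - 1) n (by simp)
  obtain ⟨invmap, hinv⟩ := CokernelCofork.IsColimit.desc' hX
    ((cyclesIso X n).inv ≫ (N X n).homologyπ n) (by
      rw [← Category.assoc, toCycles_comp_cyclesIso_inv, Category.assoc,
        toCycles_comp_homologyπ, comp_zero])
  simp only [Cofork.π_ofπ] at hinv
  refine ⟨invmap, ?_, ?_⟩
  · rw [← cancel_epi ((N X n).homologyπ n), ← Category.assoc, homologyπ_naturality,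
      Category.assoc, hinv, cyclesMap_ι, Category.comp_id]
    simp
  · rw [← cancel_epi (X.homologyπ n), ← Category.assoc, hinv, Category.assoc,
      homologyπ_naturality, ← Category.assoc, cyclesMap_ι]
    simp

lemma quasiIsoAt_ι (i : ℤ) (hi : i ≤ n) : QuasiIsoAt (ι X n) i := by
  rcases lt_or_eq_of_le hi with h | h
  · exact quasiIsoAt_ι_lt X n i h
  · rw [h]; exact quasiIsoAt_ι_eq X n

section biprodHelpers

variable {D : Type*} [Category D] [Preadditive D] [HasBinaryBiproducts D]

lemma isZero_biprod (A B : D) (hA : IsZero A) (hB : IsZero B) : IsZero (A ⊞ B) := by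
  have := (Biprod.isIso_inl_iff_isZero A B).2 hB
  exact IsZero.of_iso hA (asIso (biprod.inl : A ⟶ A ⊞ B)).symm

lemma isIso_inr_of_isZero (A B : D) (hA : IsZero A) :
    IsIso (biprod.inr : B ⟶ A ⊞ B) := by
  refine ⟨biprod.snd, by simp, ?_⟩
  apply biprod.hom_ext'
  · have : (biprod.inl : A ⟶ A ⊞ B) = 0 := hA.eq_of_src _ _
    simp [this]
  · simp

variable {E : Type*} [Category E] [Preadditive E] [HasBinaryBiproducts E]
variable (F : D ⥤ E) [F.Additive]

lemma isIso_map_inl (A B : D) (h : IsZero (F.obj B)) :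
    IsIso (F.map (biprod.inl : A ⟶ A ⊞ B)) := by
  refine ⟨F.map biprod.fst, by rw [← F.map_comp, biprod.inl_fst, F.map_id], ?_⟩
  have h2 : F.map (biprod.inr : B ⟶ A ⊞ B) = 0 := h.eq_of_src _ _
  have htot : (biprod.fst ≫ biprod.inl : A ⊞ B ⟶ A ⊞ B) = 𝟙 _ - biprod.snd ≫ biprod.inr := by
    rw [← biprod.total]; abel
  rw [← F.map_comp, htot, F.map_sub, F.map_id, F.map_comp, h2, comp_zero, sub_zero]

lemma isIso_map_inr (A B : D) (h : IsZero (F.obj A)) :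
    IsIso (F.map (biprod.inr : B ⟶ A ⊞ B)) := by
  refine ⟨F.map biprod.snd, by rw [← F.map_comp, biprod.inr_snd, F.map_id], ?_⟩
  have h2 : F.map (biprod.inl : A ⟶ A ⊞ B) = 0 := h.eq_of_src _ _
  have htot : (biprod.snd ≫ biprod.inr : A ⊞ B ⟶ A ⊞ B) = 𝟙 _ - biprod.fst ≫ biprod.inl := by
    rw [← biprod.total]; abel
  rw [← F.map_comp, htot, F.map_sub, F.map_id, F.map_comp, h2, comp_zero, sub_zero]

/-- an additive functor preserves binary biproducts, hands-on version. -/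
noncomputable def mapBiprodIso (A B : D) : F.obj (A ⊞ B) ≅ F.obj A ⊞ F.obj B where
  hom := biprod.lift (F.map biprod.fst) (F.map biprod.snd)
  inv := biprod.desc (F.map biprod.inl) (F.map biprod.inr)
  hom_inv_id := by
    rw [biprod.lift_desc, ← F.map_comp, ← F.map_comp, ← F.map_add, biprod.total, F.map_id]
  inv_hom_id := by
    apply biprod.hom_ext' <;> apply biprod.hom_ext <;>
      simp [← F.map_comp]

end biprodHelpers

end Stmt0Aux

open Stmt0Aux

/-- projective truncation trick.  Let `K` be a commutative ring, `A` a
`K`-algebra, `M` a complex in the derived category `D(Mod A)` of left `A`-modules and `i₀`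
an integer.  Suppose that `Hⁱ M = 0` for all `i > i₀` and that `P := H^{i₀} M` is a
projective `A`-module.  Then there is an isomorphism `M ≅ P[-i₀] ⊞ N` in `D(Mod A)`,
where `N` is a complex satisfying `Nⁱ = 0` for all `i ≥ i₀`.
(Here `P[-i₀]` is the complex consisting of `P` placed in degree `i₀`, i.e. the image of
`P` under the functor `DerivedCategory.singleFunctor (ModuleCat A) i₀`.) -/
theorem stmt0 (K : Type*) [CommRing K] (A : Type*) [Ring A] [Algebra K A]
    [HasDerivedCategory (ModuleCat A)]
    (M : DerivedCategory (ModuleCat A)) (i₀ : ℤ)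
    (hM : ∀ i : ℤ, i₀ < i → IsZero ((DerivedCategory.homologyFunctor (ModuleCat A) i).obj M))
    (hP : Projective ((DerivedCategory.homologyFunctor (ModuleCat A) i₀).obj M)) :
    ∃ N : CochainComplex (ModuleCat A) ℤ,
      (∀ i : ℤ, i₀ ≤ i → IsZero (N.X i)) ∧
      Nonempty (M ≅
        ((DerivedCategory.singleFunctor (ModuleCat A) i₀).obj
          ((DerivedCategory.homologyFunctor (ModuleCat A) i₀).obj M)) ⊞
        (DerivedCategory.Q.obj N)) := by
  have hess : DerivedCategory.Q (C := ModuleCat A).EssSurj :=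
    Localization.essSurj _ (HomologicalComplex.quasiIso (ModuleCat A) (ComplexShape.up ℤ))
  set X : CochainComplex (ModuleCat A) ℤ := DerivedCategory.Q.objPreimage M with hX
  let α : DerivedCategory.Q.obj X ≅ M := DerivedCategory.Q.objObjPreimageIso M
  have β : ∀ i : ℤ, X.homology i ≅ (DerivedCategory.homologyFunctor (ModuleCat A) i).obj M :=
    fun i => ((DerivedCategory.homologyFunctorFactors (ModuleCat A) i).app X).symm ≪≫
      (DerivedCategory.homologyFunctor (ModuleCat A) i).mapIso α
  have hzero : ∀ i : ℤ, i₀ < i → IsZero (X.homology i) :=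
    fun i hi => (hM i hi).of_iso (β i)
  have hproj : Projective (X.homology i₀) := Projective.of_iso (β i₀).symm hP
  set P := X.homology i₀ with hPdef
  let s : P ⟶ X.cycles i₀ := Projective.factorThru (𝟙 P) (X.homologyπ i₀)
  have hs : s ≫ X.homologyπ i₀ = 𝟙 P := Projective.factorThru_comp _ _
  set K₁ := (HomologicalComplex.single (ModuleCat A) (ComplexShape.up ℤ) i₀).obj P with hK₁
  let ψ₁ : K₁ ⟶ X := HomologicalComplex.mkHomFromSingle (s ≫ X.iCycles i₀)
    (fun i _ => by rw [Category.assoc, X.iCycles_d, comp_zero])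
  set N' := N X (i₀ - 1) with hN'
  let φ : K₁ ⊞ N' ⟶ X := biprod.desc ψ₁ (ι X (i₀ - 1))
  have hφ : QuasiIso φ := by
    refine ⟨fun i => ?_⟩
    rw [quasiIsoAt_iff_isIso_homologyMap]
    rcases lt_trichotomy i i₀ with hi | hi | hi
    · -- i < i₀ : use inr
      have hzK₁ : IsZero (K₁.homology i) :=
        isZero_homology_of_isZero K₁ i
          (HomologicalComplex.isZero_single_obj_X (ComplexShape.up ℤ) i₀ P i (by omega))
      have hinr : IsIso (HomologicalComplex.homologyMap (biprod.inr : N' ⟶ K₁ ⊞ N') i) :=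
        isIso_map_inr (HomologicalComplex.homologyFunctor (ModuleCat A) (ComplexShape.up ℤ) i)
          K₁ N' hzK₁
      have hψ₂ : QuasiIsoAt (ι X (i₀ - 1)) i := quasiIsoAt_ι X (i₀ - 1) i (by omega)
      rw [quasiIsoAt_iff_isIso_homologyMap] at hψ₂
      have fact : HomologicalComplex.homologyMap (biprod.inr : N' ⟶ K₁ ⊞ N') i ≫
          HomologicalComplex.homologyMap φ i =
          HomologicalComplex.homologyMap (ι X (i₀ - 1)) i := by
        rw [← HomologicalComplex.homologyMap_comp, biprod.inr_desc]
      have : IsIso (HomologicalComplex.homologyMap (biprod.inr : N' ⟶ K₁ ⊞ N') i ≫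
          HomologicalComplex.homologyMap φ i) := by rw [fact]; exact hψ₂
      exact IsIso.of_isIso_comp_left
        (HomologicalComplex.homologyMap (biprod.inr : N' ⟶ K₁ ⊞ N') i) _
    · -- i = i₀ : use inl
      subst hi
      have hzN : IsZero (N'.homology i) :=
        isZero_homology_of_isZero N' i (NX_isZero X (i - 1) i (by omega))
      have hinl : IsIso (HomologicalComplex.homologyMap (biprod.inl : K₁ ⟶ K₁ ⊞ N') i) :=
        isIso_map_inl (HomologicalComplex.homologyFunctor (ModuleCat A) (ComplexShape.up ℤ) i)
          K₁ N' hzN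
      have hπ1 : IsIso (K₁.homologyπ i) := K₁.isIso_homologyπ (i - 1) i (by simp)
        (HomologicalComplex.single_obj_d _ _ _ _ _)
      have hi1 : IsIso (K₁.iCycles i) := K₁.isIso_iCycles i (i + 1) (by simp)
        (HomologicalComplex.single_obj_d _ _ _ _ _)
      have c1 : HomologicalComplex.cyclesMap ψ₁ i = K₁.iCycles i ≫
          (HomologicalComplex.singleObjXSelf (ComplexShape.up ℤ) i P).hom ≫ s := by
        rw [← cancel_mono (X.iCycles i), HomologicalComplex.cyclesMap_i]
        rw [show ψ₁.f i = _ from HomologicalComplex.mkHomFromSingle_f _ _]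
        simp
      have heq : HomologicalComplex.homologyMap ψ₁ i =
          inv (K₁.homologyπ i) ≫ HomologicalComplex.cyclesMap ψ₁ i ≫ X.homologyπ i := by
        rw [IsIso.eq_inv_comp, HomologicalComplex.homologyπ_naturality]
      have hψ₁ : IsIso (HomologicalComplex.homologyMap ψ₁ i) := by
        rw [heq, c1]
        simp only [Category.assoc]
        rw [hs, Category.comp_id]
        infer_instance
      have fact : HomologicalComplex.homologyMap (biprod.inl : K₁ ⟶ K₁ ⊞ N') i ≫
          HomologicalComplex.homologyMap φ i = HomologicalComplex.homologyMap ψ₁ i := by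
        rw [← HomologicalComplex.homologyMap_comp, biprod.inl_desc]
      have : IsIso (HomologicalComplex.homologyMap (biprod.inl : K₁ ⟶ K₁ ⊞ N') i ≫
          HomologicalComplex.homologyMap φ i) := by rw [fact]; exact hψ₁
      exact IsIso.of_isIso_comp_left
        (HomologicalComplex.homologyMap (biprod.inl : K₁ ⟶ K₁ ⊞ N') i) _
    · -- i₀ < i : both zero
      have hsrc : IsZero ((K₁ ⊞ N').homology i) := by
        apply isZero_homology_of_isZero
        have e := mapBiprodIso (HomologicalComplex.eval (ModuleCat A) (ComplexShape.up ℤ) i) K₁ N'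
        exact (isZero_biprod _ _
          (HomologicalComplex.isZero_single_obj_X (ComplexShape.up ℤ) i₀ P i (by omega))
          (NX_isZero X (i₀ - 1) i (by omega))).of_iso e
      have htgt : IsZero (X.homology i) := hzero i hi
      exact ⟨0, hsrc.eq_of_src _ _, htgt.eq_of_src _ _⟩
  have hQφ : IsIso (DerivedCategory.Q.map φ) := inferInstance
  -- iso between Q.obj K₁ and the derived single functor
  have eSingleNat : (HomologicalComplex.single (ModuleCat A) (ComplexShape.up ℤ) i₀ ⋙
      DerivedCategory.Q) ≅ DerivedCategory.singleFunctor (ModuleCat A) i₀ :=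
    Iso.mk ((DerivedCategory.singleFunctorsPostcompQIso (ModuleCat A)).inv.hom i₀)
      ((DerivedCategory.singleFunctorsPostcompQIso (ModuleCat A)).hom.hom i₀)
      (by rw [DerivedCategory.singleFunctorsPostcompQIso_inv_hom,
          DerivedCategory.singleFunctorsPostcompQIso_hom_hom]
          exact Category.id_comp _)
      (by rw [DerivedCategory.singleFunctorsPostcompQIso_inv_hom,
          DerivedCategory.singleFunctorsPostcompQIso_hom_hom]
          exact Category.id_comp _)
  refine ⟨N', fun i hi => NX_isZero X (i₀ - 1) i (by omega), ⟨?_⟩⟩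
  calc M ≅ DerivedCategory.Q.obj X := α.symm
    _ ≅ DerivedCategory.Q.obj (K₁ ⊞ N') := (asIso (DerivedCategory.Q.map φ)).symm
    _ ≅ DerivedCategory.Q.obj K₁ ⊞ DerivedCategory.Q.obj N' :=
        mapBiprodIso DerivedCategory.Q K₁ N'
    _ ≅ (DerivedCategory.singleFunctor (ModuleCat A) i₀).obj P ⊞ DerivedCategory.Q.obj N' :=
        biprod.mapIso (eSingleNat.app P) (Iso.refl _)
    _ ≅ (DerivedCategory.singleFunctor (ModuleCat A) i₀).obj
          ((DerivedCategory.homologyFunctor (ModuleCat A) i₀).obj M) ⊞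
        DerivedCategory.Q.obj N' :=
        biprod.mapIso ((DerivedCategory.singleFunctor (ModuleCat A) i₀).mapIso (β i₀))
          (Iso.refl _)
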